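/- Let A, B be k×k matrices with positive integer entries over the max-times algebra, and suppose some entry of A satisfies a_{ij} ≥ 2. If A^{⊗x} ≤ B entrywise for a positive integer x, then x ≤ 2·max_{ij} b_{ij}. -/

import Mathlib

/-- Max-times matrix multiplication: `(A ⊗ B) i j = max_l (A i l * B l j)`. -/
def mtMul {k : ℕ} (A B : Matrix (Fin k) (Fin k) ℕ) : Matrix (Fin k) (Fin k) ℕ :=
  fun i j => Finset.univ.sup fun l => A i l * B l j

/-- `mtPow A m` is the `m`-th max-times tropical power `A^{⊗m}` of `A` (for `m ≥ 1`). -/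
def mtPow {k : ℕ} (A : Matrix (Fin k) (Fin k) ℕ) : ℕ → Matrix (Fin k) (Fin k) ℕ
  | 0 => A
  | 1 => A
  | m + 1 => mtMul (mtPow A m) A

lemma mtPow_succ {k : ℕ} (A : Matrix (Fin k) (Fin k) ℕ) (n : ℕ) (hn : 1 ≤ n) :
    mtPow A (n + 1) = mtMul (mtPow A n) A := by
  match n, hn with
  | m + 1, _ => rfl

lemma mtPow_grow {k : ℕ} (A : Matrix (Fin k) (Fin k) ℕ) (hApos : ∀ i j, 1 ≤ A i j)
    (i0 j0 : Fin k) (hc : 2 ≤ A i0 j0) :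
    ∀ m, 1 ≤ m → 2 ^ ((m + 1) / 2) ≤ mtPow A m i0 j0 ∧ 2 ^ (m / 2) ≤ mtPow A m i0 i0 := by
  intro m hm
  induction m, hm using Nat.le_induction with
  | base =>
    refine ⟨by simpa [mtPow] using hc, by simpa [mtPow] using hApos i0 i0⟩
  | succ n hn ih =>
    rw [mtPow_succ A n hn]
    obtain ⟨h1, h2⟩ := ih
    constructor
    · have hle : mtPow A n i0 i0 * A i0 j0 ≤ mtMul (mtPow A n) A i0 j0 :=
        Finset.le_sup (f := fun l => mtPow A n i0 l * A l j0) (Finset.mem_univ i0)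
      calc 2 ^ ((n + 1 + 1) / 2) = 2 ^ (n / 2) * 2 := by
              rw [show (n + 1 + 1) / 2 = n / 2 + 1 from by omega, pow_succ]
        _ ≤ mtPow A n i0 i0 * A i0 j0 := Nat.mul_le_mul h2 hc
        _ ≤ _ := hle
    · have hle : mtPow A n i0 j0 * A j0 i0 ≤ mtMul (mtPow A n) A i0 i0 :=
        Finset.le_sup (f := fun l => mtPow A n i0 l * A l i0) (Finset.mem_univ j0)
      calc 2 ^ ((n + 1) / 2) = 2 ^ ((n + 1) / 2) * 1 := by ring
        _ ≤ mtPow A n i0 j0 * A j0 i0 := Nat.mul_le_mul h1 (hApos j0 i0)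
        _ ≤ _ := hle

theorem mtPow_le_bound {k : ℕ} (hk : 0 < k) (A B : Matrix (Fin k) (Fin k) ℕ)
    (hApos : ∀ i j, 1 ≤ A i j) (hBpos : ∀ i j, 1 ≤ B i j)
    (hA : ∃ i j, 2 ≤ A i j)
    (x : ℕ) (hx : 1 ≤ x) (h : ∀ i j, mtPow A x i j ≤ B i j) :
    x ≤ 2 * Finset.univ.sup fun p : Fin k × Fin k => B p.1 p.2 := by
  obtain ⟨i0, j0, hc⟩ := hA
  have hgrow := (mtPow_grow A hApos i0 j0 hc x hx).1
  have hB : 2 ^ ((x + 1) / 2) ≤ B i0 j0 := le_trans hgrow (h i0 j0)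
  have hsup : B i0 j0 ≤ Finset.univ.sup fun p : Fin k × Fin k => B p.1 p.2 :=
    Finset.le_sup (f := fun p : Fin k × Fin k => B p.1 p.2) (Finset.mem_univ (i0, j0))
  have hpw : (x + 1) / 2 + 1 ≤ 2 ^ ((x + 1) / 2) := Nat.lt_two_pow_self
  omega
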